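/- For even n ≥ 6, the word p₁p₂p₃ represents the cycle C_n permutationally, where p₂ = a_n a₂a₁a₄a₃⋯a_{n−2}a_{n−3}a_{n−1}, p₃ = a_n a_{n−2}a_{n−1}a_{n−4}a_{n−3}⋯a₄a₅a₂a₃a₁, and p₁ = p_A p_B a_n a₁ a_{n−1} with p_A any permutation of the even-indexed vertices other than a_n and p_B any permutation of the odd-indexed vertices other than a₁ and a_{n−1}. -/

import Mathlib

/-- Letters `a` and `b` alternate in the word `w` if the subword of `w` obtained by
keeping only the occurrences of `a` and `b` has no two equal consecutive letters. -/
def Alternates {V : Type*} [DecidableEq V] (w : List V) (a b : V) : Prop :=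
  (w.filter fun x => decide (x = a ∨ x = b)).Chain' (· ≠ ·)

/-- The word `w` represents the simple graph `G`: distinct vertices are adjacent
iff they alternate in `w`. -/
def Represents {V : Type*} [DecidableEq V] (w : List V) (G : SimpleGraph V) : Prop :=
  ∀ a b : V, a ≠ b → (G.Adj a b ↔ Alternates w a b)

/-- The list `p` is a permutation of the type `V`: it has no duplicates and
contains every element of `V`. -/
def IsPermList {V : Type*} (p : List V) : Prop :=
  p.Nodup ∧ ∀ x : V, x ∈ p

/-- `a` precedes `b` in the list `p`. -/
def Precedes {V : Type*} [DecidableEq V] (p : List V) (a b : V) : Prop :=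
  p.idxOf a < p.idxOf b

open Fin.NatCast

section Aux

def f2 (n v : ℕ) : ℕ := if v = n-1 then 0 else if v = n-2 then n-1 else if v % 2 = 1 then v else v + 2
def f3 (n v : ℕ) : ℕ := if v = n-1 then 0 else if v = 0 then n-1 else if v % 2 = 1 then n-2-v else n-v
def cc (n v : ℕ) : ℕ := if v = n-1 then 2 else if v = 0 then 3 else if v = n-2 then 4 else if v % 2 = 1 then 0 else 1
def lo (LA LB c : ℕ) : ℕ := if c = 0 then 0 else if c = 1 then LA else if c = 2 then LA+LB else if c = 3 then LA+LB+1 else LA+LB+2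
def hi (LA LB c : ℕ) : ℕ := if c = 0 then LA else if c = 1 then LA+LB else if c = 2 then LA+LB+1 else if c = 3 then LA+LB+2 else LA+LB+3

lemma filter_single {V : Type*} [DecidableEq V] {a b : V} {l : List V}
    (hl : l.Nodup) (hb : b ∈ l) (ha : a ∉ l) :
    l.filter (fun x => decide (x = a ∨ x = b)) = [b] := by
  have h1 : l.filter (fun x => decide (x = a ∨ x = b)) = l.filter (fun x => x == b) := by
    apply List.filter_congr
    intro x hx
    have hne : x ≠ a := fun h => ha (h ▸ hx)
    by_cases h : x = b <;> simp [hne, h]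
  rw [h1]
  have h2 : l.count b = 1 := List.count_eq_one_of_mem hl hb
  rw [List.filter_beq, h2, List.replicate_one]

lemma filter_pair {V : Type*} [DecidableEq V] {a b : V} :
    ∀ {l : List V}, l.Nodup → a ∈ l → b ∈ l → a ≠ b → l.idxOf a < l.idxOf b →
    l.filter (fun x => decide (x = a ∨ x = b)) = [a, b] := by
  intro l
  induction l with
  | nil => simp
  | cons x t ih =>
    intro hnd ha hb hab hord
    rcases List.nodup_cons.mp hnd with ⟨hxt, hndt⟩
    by_cases hxa : x = a
    · subst hxa
      have hbt : b ∈ t := by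
        rcases List.mem_cons.mp hb with h | h
        · exact absurd h.symm hab
        · exact h
      rw [List.filter_cons_of_pos (by simp), filter_single hndt hbt hxt]
    · by_cases hxb : x = b
      · subst hxb
        rw [List.idxOf_cons_self] at hord
        rw [List.idxOf_cons_ne _ hxa] at hord
        omega
      · have hat : a ∈ t := by
          rcases List.mem_cons.mp ha with h | h
          · exact absurd h.symm hxa
          · exact h
        have hbt : b ∈ t := by
          rcases List.mem_cons.mp hb with h | h
          · exact absurd h.symm hxb
          · exact h
        rw [List.filter_cons_of_neg (by simp [hxa, hxb])]
        apply ih hndt hat hbt hab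
        rw [List.idxOf_cons_ne _ hxa, List.idxOf_cons_ne _ hxb] at hord
        omega

lemma filter_pair' {V : Type*} [DecidableEq V] {a b : V} {l : List V}
    (hnd : l.Nodup) (ha : a ∈ l) (hb : b ∈ l) (hab : a ≠ b) :
    (l.idxOf a < l.idxOf b ∧ l.filter (fun x => decide (x = a ∨ x = b)) = [a, b]) ∨
    (l.idxOf b < l.idxOf a ∧ l.filter (fun x => decide (x = a ∨ x = b)) = [b, a]) := by
  have hne : l.idxOf a ≠ l.idxOf b := fun h => hab ((List.idxOf_inj ha).mp h)
  rcases lt_or_gt_of_ne hne with h | h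
  · exact Or.inl ⟨h, filter_pair hnd ha hb hab h⟩
  · refine Or.inr ⟨h, ?_⟩
    have := filter_pair hnd hb ha hab.symm h
    rw [← this]
    apply List.filter_congr
    intro x _
    by_cases h1 : x = a <;> by_cases h2 : x = b <;> simp [h1, h2]

lemma alt_iff {V : Type*} [DecidableEq V] {a b : V} {w1 w2 w3 : List V}
    (h1 : w1.Nodup) (h2 : w2.Nodup) (h3 : w3.Nodup)
    (m1a : a ∈ w1) (m1b : b ∈ w1) (m2a : a ∈ w2) (m2b : b ∈ w2) (m3a : a ∈ w3) (m3b : b ∈ w3)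
    (hab : a ≠ b) :
    Alternates (w1 ++ w2 ++ w3) a b ↔
      ((w1.idxOf a < w1.idxOf b ↔ w2.idxOf a < w2.idxOf b) ∧
       (w2.idxOf a < w2.idxOf b ↔ w3.idxOf a < w3.idxOf b)) := by
  unfold Alternates
  rw [List.filter_append, List.filter_append]
  rcases filter_pair' h1 m1a m1b hab with ⟨o1, e1⟩ | ⟨o1, e1⟩ <;>
  rcases filter_pair' h2 m2a m2b hab with ⟨o2, e2⟩ | ⟨o2, e2⟩ <;>
  rcases filter_pair' h3 m3a m3b hab with ⟨o3, e3⟩ | ⟨o3, e3⟩ <;>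
  rw [e1, e2, e3] <;>
  simp [List.isChain_cons_cons, List.Chain', hab, Ne, hab.symm] <;>
  omega

lemma block_facts {n : ℕ} (l : List (Fin n)) (f : ℕ → ℕ) (hlen : l.length = n)
    (hget : ∀ v : Fin n, ∃ h : f v.val < l.length, l[f v.val] = v) :
    l.Nodup ∧ (∀ v : Fin n, v ∈ l) ∧ (∀ v : Fin n, l.idxOf v = f v.val) := by
  have hmem : ∀ v : Fin n, v ∈ l := by
    intro v
    obtain ⟨h, hv⟩ := hget v
    exact hv ▸ List.getElem_mem h
  have hsurj : Function.Surjective (fun i : Fin n => l.get (Fin.cast hlen.symm i)) := by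
    intro v
    obtain ⟨h, hv⟩ := hget v
    exact ⟨⟨f v.val, by omega⟩, hv⟩
  have hinj := Finite.injective_iff_surjective.mpr hsurj
  have hnd : l.Nodup := by
    rw [List.nodup_iff_injective_get]
    intro i j hij
    have h2 := hinj (a₁ := Fin.cast hlen i) (a₂ := Fin.cast hlen j) hij
    rw [Fin.ext_iff] at h2 ⊢
    exact h2
  refine ⟨hnd, hmem, fun v => ?_⟩
  obtain ⟨h, hv⟩ := hget v
  conv_lhs => rw [← hv]
  exact List.Nodup.idxOf_getElem hnd _ h

lemma flatMap_pair {α : Type*} (f g : ℕ → α) :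
    ∀ m : ℕ, (List.range m).flatMap (fun k => [f k, g k]) =
      (List.range (2*m)).map (fun j => if j % 2 = 0 then f (j/2) else g (j/2)) := by
  intro m
  induction m with
  | zero => simp
  | succ m ih =>
    have h2 : 2 * (m + 1) = (2*m + 1) + 1 := by ring
    rw [List.range_succ, List.flatMap_append, ih, h2, List.range_succ, List.range_succ]
    simp only [List.map_append, List.flatMap_singleton]
    have e1 : (2*m) % 2 = 0 := by omega
    have e2 : (2*m) / 2 = m := by omega
    have e3 : (2*m+1) % 2 = 1 := by omega
    have e4 : (2*m+1) / 2 = m := by omega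
    simp [e1, e2, e3, e4]

lemma get_shape_mid {α : Type*} (x y : α) (mid : List α) (p : ℕ) (h1 : 1 ≤ p)
    (h2 : p - 1 < mid.length) (hlt : p < (x :: (mid ++ [y])).length) :
    (x :: (mid ++ [y]))[p] = mid[p-1] := by
  obtain ⟨q, rfl⟩ : ∃ q, p = q + 1 := ⟨p - 1, by omega⟩
  rw [List.getElem_cons_succ, List.getElem_append_left]
  congr 1
  omega

lemma get_shape_last {α : Type*} (x y : α) (mid : List α) (p : ℕ) (h1 : p = mid.length + 1)
    (hlt : p < (x :: (mid ++ [y])).length) :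
    (x :: (mid ++ [y]))[p] = y := by
  subst h1
  rw [List.getElem_cons_succ, List.getElem_concat_length rfl]

lemma w2_structure (n : ℕ) [NeZero n] (hn : 6 ≤ n) (he : n % 2 = 0) :
    (((n - 1 : ℕ) : Fin n) ::
        (((List.range ((n - 2) / 2)).flatMap fun k =>
          [((2 * k + 1 : ℕ) : Fin n), ((2 * k : ℕ) : Fin n)]) ++ [((n - 2 : ℕ) : Fin n)]))
    = ((n - 1 : ℕ) : Fin n) ::
        ((List.range (n-2)).map (fun j => if j % 2 = 0 then ((j+1 : ℕ) : Fin n) else ((j-1 : ℕ) : Fin n))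
          ++ [((n - 2 : ℕ) : Fin n)]) := by
  rw [flatMap_pair]
  have h1 : 2 * ((n-2)/2) = n - 2 := by omega
  rw [h1]
  congr 1
  congr 1
  apply List.map_congr_left
  intro j hj
  rw [List.mem_range] at hj
  by_cases h : j % 2 = 0
  · rw [if_pos h, if_pos h]
    congr 1
    omega
  · rw [if_neg h, if_neg h]
    congr 1
    omega

lemma w3_structure (n : ℕ) [NeZero n] (hn : 6 ≤ n) (he : n % 2 = 0) :
    (((n - 1 : ℕ) : Fin n) ::
        (((List.range ((n - 2) / 2)).flatMap fun k =>
          [((n - 3 - 2 * k : ℕ) : Fin n), ((n - 2 - 2 * k : ℕ) : Fin n)]) ++ [(0 : Fin n)]))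
    = ((n - 1 : ℕ) : Fin n) ::
        ((List.range (n-2)).map (fun j => if j % 2 = 0 then ((n-3-j : ℕ) : Fin n) else ((n-1-j : ℕ) : Fin n))
          ++ [(0 : Fin n)]) := by
  rw [flatMap_pair]
  have h1 : 2 * ((n-2)/2) = n - 2 := by omega
  rw [h1]
  congr 1
  congr 1
  apply List.map_congr_left
  intro j hj
  rw [List.mem_range] at hj
  by_cases h : j % 2 = 0
  · rw [if_pos h, if_pos h]
    congr 1
    omega
  · rw [if_neg h, if_neg h]
    congr 1
    omega

lemma w2_get (n : ℕ) [NeZero n] (hn : 6 ≤ n) (he : n % 2 = 0) (v : Fin n) :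
    ∃ h : f2 n v.val <
      (((n - 1 : ℕ) : Fin n) ::
        ((List.range (n-2)).map (fun j => if j % 2 = 0 then ((j+1 : ℕ) : Fin n) else ((j-1 : ℕ) : Fin n))
          ++ [((n - 2 : ℕ) : Fin n)])).length,
      (((n - 1 : ℕ) : Fin n) ::
        ((List.range (n-2)).map (fun j => if j % 2 = 0 then ((j+1 : ℕ) : Fin n) else ((j-1 : ℕ) : Fin n))
          ++ [((n - 2 : ℕ) : Fin n)]))[f2 n v.val] = v := by
  have hv := v.isLt
  set F : ℕ → Fin n := fun j => if j % 2 = 0 then ((j+1 : ℕ) : Fin n) else ((j-1 : ℕ) : Fin n) with hF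
  have hmidlen : ((List.range (n-2)).map F).length = n - 2 := by simp
  have hlen : (((n - 1 : ℕ) : Fin n) :: ((List.range (n-2)).map F ++ [((n - 2 : ℕ) : Fin n)])).length = n := by
    simp
    omega
  have hf : f2 n v.val < n := by unfold f2; split_ifs <;> omega
  refine ⟨by omega, ?_⟩
  by_cases h1 : v.val = n-1
  · have e : f2 n v.val = 0 := by unfold f2; split_ifs <;> omega
    simp only [e, List.getElem_cons_zero]
    apply Fin.ext
    rw [Fin.val_cast_of_lt (by omega)]
    omega
  · by_cases h2 : v.val = n-2
    · have e : f2 n v.val = n-1 := by unfold f2; split_ifs <;> omega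
      simp only [e]
      rw [get_shape_last _ _ _ _ (by rw [hmidlen]; omega)]
      apply Fin.ext
      rw [Fin.val_cast_of_lt (by omega)]
      omega
    · by_cases h3 : v.val % 2 = 1
      · have e : f2 n v.val = v.val := by unfold f2; split_ifs <;> omega
        simp only [e]
        rw [get_shape_mid _ _ _ _ (by omega) (by rw [hmidlen]; omega)]
        rw [List.getElem_map, List.getElem_range]
        rw [hF]
        simp only []
        rw [if_pos (by omega : (v.val - 1) % 2 = 0)]
        apply Fin.ext
        rw [Fin.val_cast_of_lt (by omega)]
        omega
      · have e : f2 n v.val = v.val + 2 := by unfold f2; split_ifs <;> omega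
        simp only [e]
        rw [get_shape_mid _ _ _ _ (by omega) (by rw [hmidlen]; omega)]
        rw [List.getElem_map, List.getElem_range]
        rw [hF]
        simp only []
        rw [if_neg (by omega : ¬(v.val + 2 - 1) % 2 = 0)]
        apply Fin.ext
        rw [Fin.val_cast_of_lt (by omega)]
        omega

lemma w3_get (n : ℕ) [NeZero n] (hn : 6 ≤ n) (he : n % 2 = 0) (v : Fin n) :
    ∃ h : f3 n v.val <
      (((n - 1 : ℕ) : Fin n) ::
        ((List.range (n-2)).map (fun j => if j % 2 = 0 then ((n-3-j : ℕ) : Fin n) else ((n-1-j : ℕ) : Fin n))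
          ++ [(0 : Fin n)])).length,
      (((n - 1 : ℕ) : Fin n) ::
        ((List.range (n-2)).map (fun j => if j % 2 = 0 then ((n-3-j : ℕ) : Fin n) else ((n-1-j : ℕ) : Fin n))
          ++ [(0 : Fin n)]))[f3 n v.val] = v := by
  have hv := v.isLt
  set F : ℕ → Fin n := fun j => if j % 2 = 0 then ((n-3-j : ℕ) : Fin n) else ((n-1-j : ℕ) : Fin n) with hF
  have hmidlen : ((List.range (n-2)).map F).length = n - 2 := by simp
  have hf : f3 n v.val < n := by unfold f3; split_ifs <;> omega
  refine ⟨by simp; omega, ?_⟩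
  by_cases h1 : v.val = n-1
  · have e : f3 n v.val = 0 := by unfold f3; split_ifs <;> omega
    simp only [e, List.getElem_cons_zero]
    apply Fin.ext
    rw [Fin.val_cast_of_lt (by omega)]
    omega
  · by_cases h2 : v.val = 0
    · have e : f3 n v.val = n-1 := by unfold f3; split_ifs <;> omega
      simp only [e]
      rw [get_shape_last _ _ _ _ (by rw [hmidlen]; omega)]
      apply Fin.ext
      rw [Fin.val_zero]
      omega
    · by_cases h3 : v.val % 2 = 1
      · have e : f3 n v.val = n-2-v.val := by unfold f3; split_ifs <;> omega
        simp only [e]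
        rw [get_shape_mid _ _ _ _ (by omega) (by rw [hmidlen]; omega)]
        rw [List.getElem_map, List.getElem_range]
        rw [hF]
        simp only []
        rw [if_pos (by omega : (n-2-v.val - 1) % 2 = 0)]
        apply Fin.ext
        rw [Fin.val_cast_of_lt (by omega)]
        omega
      · have e : f3 n v.val = n-v.val := by unfold f3; split_ifs <;> omega
        simp only [e]
        rw [get_shape_mid _ _ _ _ (by omega) (by rw [hmidlen]; omega)]
        rw [List.getElem_map, List.getElem_range]
        rw [hF]
        simp only []
        rw [if_neg (by omega : ¬(n-v.val - 1) % 2 = 0)]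
        apply Fin.ext
        rw [Fin.val_cast_of_lt (by omega)]
        omega

lemma w1_facts {n : ℕ} [NeZero n] (hn : 6 ≤ n) (he : n % 2 = 0) (pA pB : List (Fin n))
    (hA : pA.Nodup ∧ ∀ x : Fin n, x ∈ pA ↔ (x.val % 2 = 1 ∧ x.val ≠ n - 1))
    (hB : pB.Nodup ∧ ∀ x : Fin n, x ∈ pB ↔ (x.val % 2 = 0 ∧ x.val ≠ 0 ∧ x.val ≠ n - 2)) :
    (pA ++ pB ++ [((n - 1 : ℕ) : Fin n), (0 : Fin n), ((n - 2 : ℕ) : Fin n)]).Nodup ∧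
    (∀ v : Fin n, v ∈ (pA ++ pB ++ [((n - 1 : ℕ) : Fin n), (0 : Fin n), ((n - 2 : ℕ) : Fin n)])) ∧
    (∀ a b : Fin n, cc n a.val < cc n b.val →
      (pA ++ pB ++ [((n - 1 : ℕ) : Fin n), (0 : Fin n), ((n - 2 : ℕ) : Fin n)]).idxOf a <
      (pA ++ pB ++ [((n - 1 : ℕ) : Fin n), (0 : Fin n), ((n - 2 : ℕ) : Fin n)]).idxOf b) := by
  have hx : (((n - 1 : ℕ) : Fin n)).val = n - 1 := Fin.val_cast_of_lt (by omega)
  have hy : ((0 : Fin n)).val = 0 := Fin.val_zero n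
  have hz : (((n - 2 : ℕ) : Fin n)).val = n - 2 := Fin.val_cast_of_lt (by omega)
  set x : Fin n := ((n - 1 : ℕ) : Fin n) with hxdef
  set y : Fin n := (0 : Fin n) with hydef
  set z : Fin n := ((n - 2 : ℕ) : Fin n) with hzdef
  set w1 : List (Fin n) := pA ++ pB ++ [x, y, z] with hw1
  have hxy : x ≠ y := fun h => by rw [Fin.ext_iff, hx, hy] at h; omega
  have hxz : x ≠ z := fun h => by rw [Fin.ext_iff, hx, hz] at h; omega
  have hyz : y ≠ z := fun h => by rw [Fin.ext_iff, hy, hz] at h; omega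
  have hxA : x ∉ pA := fun h => by have := (hA.2 x).mp h; rw [hx] at this; omega
  have hxB : x ∉ pB := fun h => by have := (hB.2 x).mp h; rw [hx] at this; omega
  have hyA : y ∉ pA := fun h => by have := (hA.2 y).mp h; rw [hy] at this; omega
  have hyB : y ∉ pB := fun h => by have := (hB.2 y).mp h; rw [hy] at this; omega
  have hzA : z ∉ pA := fun h => by have := (hA.2 z).mp h; rw [hz] at this; omega
  have hzB : z ∉ pB := fun h => by have := (hB.2 z).mp h; rw [hz] at this; omega
  have hdisj : pA.Disjoint pB := by
    intro v hvA hvB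
    have h1 := (hA.2 v).mp hvA
    have h2 := (hB.2 v).mp hvB
    omega
  have hnd : w1.Nodup := by
    rw [hw1, List.nodup_append, List.nodup_append]
    refine ⟨⟨hA.1, hB.1, fun a ha b hb hab => hdisj ha (hab ▸ hb)⟩, by simp [hxy, hxz, hyz], ?_⟩
    intro v hv u hv2 hvu
    rw [← hvu] at hv2
    simp only [List.mem_cons, List.mem_singleton, List.not_mem_nil, or_false] at hv2
    rcases List.mem_append.mp hv with h | h <;> rcases hv2 with rfl | rfl | rfl
    exacts [hxA h, hyA h, hzA h, hxB h, hyB h, hzB h]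
  have hmem : ∀ v : Fin n, v ∈ w1 := by
    intro v
    have hv := v.isLt
    rw [hw1]
    by_cases h1 : v.val = n-1
    · have hvx : v = x := Fin.ext (by rw [hx]; omega)
      exact List.mem_append_right _ (by rw [hvx]; simp)
    · by_cases h2 : v.val = 0
      · have hvy : v = y := Fin.ext (by rw [hy]; omega)
        exact List.mem_append_right _ (by rw [hvy]; simp)
      · by_cases h3 : v.val = n-2
        · have hvz : v = z := Fin.ext (by rw [hz]; omega)
          exact List.mem_append_right _ (by rw [hvz]; simp)
        · by_cases h4 : v.val % 2 = 1
          · exact List.mem_append_left _ (List.mem_append_left _ ((hA.2 v).mpr ⟨h4, h1⟩))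
          · exact List.mem_append_left _ (List.mem_append_right _ ((hB.2 v).mpr ⟨by omega, h2, h3⟩))
  have kA : ∀ v ∈ pA, w1.idxOf v < pA.length := by
    intro v hv
    rw [hw1, List.idxOf_append_of_mem (List.mem_append_left _ hv), List.idxOf_append_of_mem hv]
    exact List.idxOf_lt_length_iff.mpr hv
  have kB : ∀ v ∈ pB, pA.length ≤ w1.idxOf v ∧ w1.idxOf v < pA.length + pB.length := by
    intro v hv
    have hvA : v ∉ pA := fun h => hdisj h hv
    rw [hw1, List.idxOf_append_of_mem (List.mem_append_right _ hv), List.idxOf_append_of_notMem hvA]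
    have := List.idxOf_lt_length_iff.mpr hv
    omega
  have kx : w1.idxOf x = pA.length + pB.length := by
    rw [hw1, List.idxOf_append_of_notMem (by simp [hxA, hxB]), List.idxOf_cons_self,
        List.length_append]
    omega
  have ky : w1.idxOf y = pA.length + pB.length + 1 := by
    rw [hw1, List.idxOf_append_of_notMem (by simp [hyA, hyB]), List.idxOf_cons_ne _ hxy,
        List.idxOf_cons_self, List.length_append]
  have kz : w1.idxOf z = pA.length + pB.length + 2 := by
    rw [hw1, List.idxOf_append_of_notMem (by simp [hzA, hzB]), List.idxOf_cons_ne _ hxz,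
        List.idxOf_cons_ne _ hyz, List.idxOf_cons_self, List.length_append]
  have key : ∀ v : Fin n, lo pA.length pB.length (cc n v.val) ≤ w1.idxOf v ∧
      w1.idxOf v < hi pA.length pB.length (cc n v.val) := by
    intro v
    have hv := v.isLt
    by_cases h1 : v.val = n-1
    · have hvx : v = x := Fin.ext (by rw [hx]; omega)
      have e : cc n v.val = 2 := by unfold cc; split_ifs <;> omega
      rw [e, hvx, kx]
      unfold lo hi
      norm_num
    · by_cases h2 : v.val = 0
      · have hvy : v = y := Fin.ext (by rw [hy]; omega)
        have e : cc n v.val = 3 := by unfold cc; split_ifs <;> omega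
        rw [e, hvy, ky]
        unfold lo hi
        norm_num
      · by_cases h3 : v.val = n-2
        · have hvz : v = z := Fin.ext (by rw [hz]; omega)
          have e : cc n v.val = 4 := by unfold cc; split_ifs <;> omega
          rw [e, hvz, kz]
          unfold lo hi
          norm_num
        · by_cases h4 : v.val % 2 = 1
          · have hvA : v ∈ pA := (hA.2 v).mpr ⟨h4, h1⟩
            have e : cc n v.val = 0 := by unfold cc; split_ifs <;> omega
            rw [e]
            unfold lo hi
            norm_num
            exact kA v hvA
          · have hvB : v ∈ pB := (hB.2 v).mpr ⟨by omega, h2, h3⟩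
            have e : cc n v.val = 1 := by unfold cc; split_ifs <;> omega
            rw [e]
            unfold lo hi
            norm_num
            exact kB v hvB
  have mono : ∀ c c' : ℕ, c < c' → c' ≤ 4 →
      hi pA.length pB.length c ≤ lo pA.length pB.length c' := by
    intro c c' h h'
    unfold lo hi
    split_ifs <;> omega
  refine ⟨hnd, hmem, fun a b h => ?_⟩
  have ha := key a
  have hb := key b
  have hcb : cc n b.val ≤ 4 := by unfold cc; split_ifs <;> omega
  have := mono _ _ h hcb
  omega

lemma arith_lt (n va vb : ℕ) (hn : 6 ≤ n) (he : n % 2 = 0) (hva : va < n) (hvb : vb < n)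
    (hne : va ≠ vb) (h : cc n va < cc n vb) :
    (va+1 = vb ∨ vb+1 = va ∨ (va = 0 ∧ vb = n-1) ∨ (vb = 0 ∧ va = n-1)) ↔
      (f2 n va < f2 n vb ∧ (f2 n va < f2 n vb ↔ f3 n va < f3 n vb)) := by
  unfold f2 f3 cc at *
  split_ifs at * <;> omega

lemma arith_gt (n va vb : ℕ) (hn : 6 ≤ n) (he : n % 2 = 0) (hva : va < n) (hvb : vb < n)
    (hne : va ≠ vb) (h : cc n vb < cc n va) :
    (va+1 = vb ∨ vb+1 = va ∨ (va = 0 ∧ vb = n-1) ∨ (vb = 0 ∧ va = n-1)) ↔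
      (¬(f2 n va < f2 n vb) ∧ (f2 n va < f2 n vb ↔ f3 n va < f3 n vb)) := by
  unfold f2 f3 cc at *
  split_ifs at * <;> omega

lemma arith_eq (n va vb : ℕ) (hn : 6 ≤ n) (he : n % 2 = 0) (hva : va < n) (hvb : vb < n)
    (hne : va ≠ vb) (h : cc n va = cc n vb) :
    ¬(va+1 = vb ∨ vb+1 = va ∨ (va = 0 ∧ vb = n-1) ∨ (vb = 0 ∧ va = n-1)) ∧
      ¬(f2 n va < f2 n vb ↔ f3 n va < f3 n vb) := by
  unfold f2 f3 cc at *
  split_ifs at * <;> omega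

lemma mod_small (x n : ℕ) (hn : 0 < n) (h : x < 2*n) : x % n = if x < n then x else x - n := by
  split_ifs with h1
  · exact Nat.mod_eq_of_lt h1
  · rw [Nat.mod_eq_sub_mod (by omega)]
    exact Nat.mod_eq_of_lt (by omega)

lemma adj_iff (n : ℕ) (hn : 2 ≤ n) (a b : Fin n) :
    (SimpleGraph.cycleGraph n).Adj a b ↔
      (a.val + 1 = b.val ∨ b.val + 1 = a.val ∨ (a.val = 0 ∧ b.val = n-1) ∨ (b.val = 0 ∧ a.val = n-1)) := by
  rw [SimpleGraph.cycleGraph_adj', Fin.sub_def, Fin.sub_def]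
  simp only
  have hva := a.isLt
  have hvb := b.isLt
  rw [mod_small _ _ (by omega) (by omega), mod_small _ _ (by omega) (by omega)]
  split_ifs <;> omega

end Aux

/-- For even `n ≥ 6`, the word `p₁p₂p₃` represents the cycle `C_n` permutationally, where
`p₂ = a_n a₂a₁a₄a₃⋯a_{n−2}a_{n−3}a_{n−1}`,
`p₃ = a_n a_{n−2}a_{n−1}a_{n−4}a_{n−3}⋯a₄a₅a₂a₃a₁`, and
`p₁ = p_A p_B a_n a₁ a_{n−1}` with `p_A` any permutation of the even-indexed vertices
other than `a_n`, and `p_B` any permutation of the odd-indexed vertices other than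
`a₁` and `a_{n−1}`. Here `a_i` is the vertex `i - 1 : Fin n`. -/
theorem cycle_word_even (n : ℕ) [NeZero n] (hn : 6 ≤ n) (heven : Even n)
    (pA pB : List (Fin n))
    (hA : pA.Nodup ∧ ∀ x : Fin n, x ∈ pA ↔ (x.val % 2 = 1 ∧ x.val ≠ n - 1))
    (hB : pB.Nodup ∧ ∀ x : Fin n, x ∈ pB ↔ (x.val % 2 = 0 ∧ x.val ≠ 0 ∧ x.val ≠ n - 2)) :
    Represents
      ((pA ++ pB ++ [((n - 1 : ℕ) : Fin n), (0 : Fin n), ((n - 2 : ℕ) : Fin n)]) ++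
       (((n - 1 : ℕ) : Fin n) ::
        (((List.range ((n - 2) / 2)).flatMap fun k =>
          [((2 * k + 1 : ℕ) : Fin n), ((2 * k : ℕ) : Fin n)]) ++ [((n - 2 : ℕ) : Fin n)])) ++
       (((n - 1 : ℕ) : Fin n) ::
        (((List.range ((n - 2) / 2)).flatMap fun k =>
          [((n - 3 - 2 * k : ℕ) : Fin n), ((n - 2 - 2 * k : ℕ) : Fin n)]) ++ [(0 : Fin n)])))
      (SimpleGraph.cycleGraph n) := by
  intro a b hab
  have he' : n % 2 = 0 := Nat.even_iff.mp heven
  have hva := a.isLt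
  have hvb := b.isLt
  have hne : a.val ≠ b.val := fun h => hab (Fin.ext h)
  rw [w2_structure n hn he', w3_structure n hn he']
  obtain ⟨nd1, mem1, ord1⟩ := w1_facts hn he' pA pB hA hB
  obtain ⟨nd2, mem2, idx2⟩ := block_facts _ (f2 n) (by simp; omega) (w2_get n hn he')
  obtain ⟨nd3, mem3, idx3⟩ := block_facts _ (f3 n) (by simp; omega) (w3_get n hn he')
  rw [alt_iff nd1 nd2 nd3 (mem1 a) (mem1 b) (mem2 a) (mem2 b) (mem3 a) (mem3 b) hab]
  rw [adj_iff n (by omega) a b, idx2 a, idx2 b, idx3 a, idx3 b]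
  rcases lt_trichotomy (cc n a.val) (cc n b.val) with hlt | heq | hgt
  · have hO1 := ord1 a b hlt
    have harith := arith_lt n a.val b.val hn he' hva hvb hne hlt
    constructor
    · intro h
      obtain ⟨h2, h23⟩ := harith.mp h
      exact ⟨iff_of_true hO1 h2, h23⟩
    · rintro ⟨hP, h23⟩
      exact harith.mpr ⟨hP.mp hO1, h23⟩
  · have harith := arith_eq n a.val b.val hn he' hva hvb hne heq
    constructor
    · intro h
      exact absurd h harith.1
    · rintro ⟨_, h23⟩
      exact absurd h23 harith.2
  · have hO1 := ord1 b a hgt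
    have harith := arith_gt n a.val b.val hn he' hva hvb hne hgt
    constructor
    · intro h
      obtain ⟨h2, h23⟩ := harith.mp h
      exact ⟨iff_of_false (by omega) h2, h23⟩
    · rintro ⟨hP, h23⟩
      refine harith.mpr ⟨fun ho2 => ?_, h23⟩
      have := hP.mpr ho2
      omega
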